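/- Let P > 0 and let λ, k, γ, ν, Ĉ, D̂ be real numbers with γ ≠ 0 and λk² ≠ 0. Suppose u : ℝ → ℝ is twice continuously differentiable, periodic with period 2P, and satisfies for all θ ∈ ℝ both λk²u''(θ) = (γ/3)u(θ)³ − (ν/2)u(θ)² + Ĉ and (λk²/2)u'(θ)² = (γ/12)u(θ)⁴ − (ν/6)u(θ)³ + Ĉu(θ) + D̂. Let α₁ = ⟨u⟩ and α₂ = ⟨u²⟩. Then ⟨u(u')²⟩ = (γ/(6λk²)) ( α₂(9Ĉ/(2γ) − 5ν³/(8γ³)) + α₁(6D̂/γ + 3νĈ/(2γ²)) + 5ν²Ĉ/(4γ³) + νD̂/γ² ), where ⟨f⟩ = (1/(2P))∫₀^{2P} f(θ)dθ. -/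

import Mathlib

/-- Evaluation of `⟨u(u')²⟩` (the integral `Ĩ₂`) in terms of `α₁ = ⟨u⟩`,
`α₂ = ⟨u²⟩` and the integration constants of the steady Gardner equation. -/
theorem moment_I2
    (P lam k γ ν C D : ℝ) (hP : 0 < P) (hγ : γ ≠ 0) (hlk : lam * k ^ 2 ≠ 0)
    (u : ℝ → ℝ) (hu : ContDiff ℝ 2 u)
    (hper : Function.Periodic u (2 * P))
    (heq1 : ∀ θ : ℝ, lam * k ^ 2 * iteratedDeriv 2 u θ
      = (γ / 3) * (u θ) ^ 3 - (ν / 2) * (u θ) ^ 2 + C)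
    (heq2 : ∀ θ : ℝ, (lam * k ^ 2 / 2) * (deriv u θ) ^ 2
      = (γ / 12) * (u θ) ^ 4 - (ν / 6) * (u θ) ^ 3 + C * u θ + D)
    (α₁ α₂ : ℝ)
    (hα₁ : α₁ = (1 / (2 * P)) * ∫ θ in (0:ℝ)..(2 * P), u θ)
    (hα₂ : α₂ = (1 / (2 * P)) * ∫ θ in (0:ℝ)..(2 * P), (u θ) ^ 2) :
    (1 / (2 * P)) * ∫ θ in (0:ℝ)..(2 * P), u θ * (deriv u θ) ^ 2
      = (γ / (6 * lam * k ^ 2)) *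
          (α₂ * (9 * C / (2 * γ) - 5 * ν ^ 3 / (8 * γ ^ 3))
           + α₁ * (6 * D / γ + 3 * ν * C / (2 * γ ^ 2))
           + 5 * ν ^ 2 * C / (4 * γ ^ 3) + ν * D / γ ^ 2) := by
  have hL : (2 * P) ≠ 0 := by positivity
  have hcu : Continuous u := hu.continuous
  have hud : Differentiable ℝ u := hu.differentiable two_ne_zero
  have hu1 : ContDiff ℝ 1 (deriv u) := by
    have h : ContDiff ℝ ((1:ℕ) + 1) u := by exact_mod_cast hu
    exact (contDiff_succ_iff_deriv.mp h).2.2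
  have hcu' : Continuous (deriv u) := hu1.continuous
  have hu'd : Differentiable ℝ (deriv u) := hu1.differentiable one_ne_zero
  have h2eq : iteratedDeriv 2 u = deriv (deriv u) := by
    rw [iteratedDeriv_succ, iteratedDeriv_one]
  have hcu'' : Continuous (iteratedDeriv 2 u) := by
    have h : iteratedDeriv 2 u
        = fun θ => (1 / (lam * k ^ 2)) * ((γ / 3) * (u θ) ^ 3 - (ν / 2) * (u θ) ^ 2 + C) := by
      funext θ
      rw [← heq1 θ]
      rw [← mul_assoc, one_div_mul_cancel hlk, one_mul]
    rw [h]
    fun_prop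
  -- periodicity of deriv u
  have hperd : Function.Periodic (deriv u) (2 * P) := by
    intro x
    have h : (fun y => u (y + 2 * P)) = u := funext hper
    rw [← deriv_comp_add_const u (2 * P) x, h]
  -- integral of the derivative of a periodic function vanishes
  have key : ∀ g g' : ℝ → ℝ, (∀ θ, HasDerivAt g (g' θ) θ) → Continuous g' →
      Function.Periodic g (2 * P) → (∫ θ in (0:ℝ)..(2 * P), g' θ) = 0 := by
    intro g g' hg hg' hgp
    rw [intervalIntegral.integral_eq_sub_of_hasDerivAt (fun x _ => hg x)
      (hg'.intervalIntegrable 0 (2 * P))]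
    have h0 := hgp 0
    rw [zero_add] at h0
    rw [h0, sub_self]
  -- the three vanishing integrals
  have F1 : (∫ θ in (0:ℝ)..(2 * P), iteratedDeriv 2 u θ) = 0 := by
    refine key (deriv u) _ (fun θ => ?_) hcu'' hperd
    rw [h2eq]
    exact (hu'd θ).hasDerivAt
  have F2 : (∫ θ in (0:ℝ)..(2 * P),
      ((deriv u θ) ^ 2 + u θ * iteratedDeriv 2 u θ)) = 0 := by
    refine key (fun θ => u θ * deriv u θ) _ (fun θ => ?_)
      (by fun_prop) (hper.mul hperd)
    have h := ((hud θ).hasDerivAt).mul ((hu'd θ).hasDerivAt)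
    rw [h2eq]
    refine h.congr_deriv ?_
    ring
  have F3 : (∫ θ in (0:ℝ)..(2 * P),
      (2 * (u θ * (deriv u θ) ^ 2) + (u θ) ^ 2 * iteratedDeriv 2 u θ)) = 0 := by
    refine key (fun θ => (u θ) ^ 2 * deriv u θ) _ (fun θ => ?_)
      (by fun_prop) (fun x => by simp only [hper x, hperd x])
    have h := (((hud θ).hasDerivAt).pow 2).mul ((hu'd θ).hasDerivAt)
    rw [h2eq]
    refine h.congr_deriv ?_
    simp only [Pi.pow_apply]
    norm_num
    ring
  -- splitting helper
  have split4 : ∀ (a b c d : ℝ) (f g h m : ℝ → ℝ), Continuous f → Continuous g →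
      Continuous h → Continuous m →
      (∫ θ in (0:ℝ)..(2 * P), (a * f θ - b * g θ + c * h θ + d * m θ))
        = a * (∫ θ in (0:ℝ)..(2 * P), f θ) - b * (∫ θ in (0:ℝ)..(2 * P), g θ)
          + c * (∫ θ in (0:ℝ)..(2 * P), h θ) + d * (∫ θ in (0:ℝ)..(2 * P), m θ) := by
    intro a b c d f g h m hf hg hh hm
    rw [intervalIntegral.integral_add, intervalIntegral.integral_add,
      intervalIntegral.integral_sub, intervalIntegral.integral_const_mul,
      intervalIntegral.integral_const_mul, intervalIntegral.integral_const_mul,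
      intervalIntegral.integral_const_mul]
    all_goals
      apply Continuous.intervalIntegrable
      fun_prop
  -- abbreviations for the integrals
  set M1 := ∫ θ in (0:ℝ)..(2 * P), u θ with hM1
  set M2 := ∫ θ in (0:ℝ)..(2 * P), (u θ) ^ 2 with hM2
  set M3 := ∫ θ in (0:ℝ)..(2 * P), (u θ) ^ 3 with hM3
  set M4 := ∫ θ in (0:ℝ)..(2 * P), (u θ) ^ 4 with hM4
  set M5 := ∫ θ in (0:ℝ)..(2 * P), (u θ) ^ 5 with hM5
  set E := ∫ θ in (0:ℝ)..(2 * P), (deriv u θ) ^ 2 with hE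
  set T := ∫ θ in (0:ℝ)..(2 * P), u θ * (deriv u θ) ^ 2 with hT
  set A1 := ∫ θ in (0:ℝ)..(2 * P), u θ * iteratedDeriv 2 u θ with hA1
  set A2 := ∫ θ in (0:ℝ)..(2 * P), (u θ) ^ 2 * iteratedDeriv 2 u θ with hA2
  have hone : (∫ θ in (0:ℝ)..(2 * P), (1:ℝ)) = 2 * P := by simp
  -- integrated equations
  have e1 : (0:ℝ) = (γ / 3) * M3 - (ν / 2) * M2 + C * (2 * P) + 0 * (2 * P) := by
    have e1' : (lam * k ^ 2) * (∫ θ in (0:ℝ)..(2 * P), iteratedDeriv 2 u θ)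
        = (γ / 3) * M3 - (ν / 2) * M2 + C * (2 * P) + 0 * (2 * P) := by
      rw [show (γ / 3) * M3 - (ν / 2) * M2 + C * (2 * P) + 0 * (2 * P)
          = (γ / 3) * M3 - (ν / 2) * M2 + C * (∫ θ in (0:ℝ)..(2 * P), (1:ℝ))
            + 0 * (∫ θ in (0:ℝ)..(2 * P), (1:ℝ)) by rw [hone]]
      rw [← split4 (γ / 3) (ν / 2) C 0 (fun θ => (u θ) ^ 3) (fun θ => (u θ) ^ 2)
        (fun _ => 1) (fun _ => 1) (by fun_prop) (by fun_prop) (by fun_prop) (by fun_prop)]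
      rw [← intervalIntegral.integral_const_mul]
      exact intervalIntegral.integral_congr fun θ _ => by
        linear_combination heq1 θ
    rw [F1, mul_zero] at e1'
    exact e1'
  have e2 : (lam * k ^ 2) * A1 = (γ / 3) * M4 - (ν / 2) * M3 + C * M1 + 0 * M1 := by
    rw [← split4 (γ / 3) (ν / 2) C 0 (fun θ => (u θ) ^ 4) (fun θ => (u θ) ^ 3)
      u u (by fun_prop) (by fun_prop) hcu hcu]
    rw [hA1, ← intervalIntegral.integral_const_mul]
    exact intervalIntegral.integral_congr fun θ _ => by
      linear_combination (u θ) * heq1 θ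
  have e3 : (lam * k ^ 2) * A2 = (γ / 3) * M5 - (ν / 2) * M4 + C * M2 + 0 * M2 := by
    rw [← split4 (γ / 3) (ν / 2) C 0 (fun θ => (u θ) ^ 5) (fun θ => (u θ) ^ 4)
      (fun θ => (u θ) ^ 2) (fun θ => (u θ) ^ 2) (by fun_prop) (by fun_prop)
      (by fun_prop) (by fun_prop)]
    rw [hA2, ← intervalIntegral.integral_const_mul]
    exact intervalIntegral.integral_congr fun θ _ => by
      linear_combination ((u θ) ^ 2) * heq1 θ
  have e4 : (lam * k ^ 2 / 2) * E = (γ / 12) * M4 - (ν / 6) * M3 + C * M1 + D * (2 * P) := by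
    rw [show (γ / 12) * M4 - (ν / 6) * M3 + C * M1 + D * (2 * P)
        = (γ / 12) * M4 - (ν / 6) * M3 + C * M1
          + D * (∫ θ in (0:ℝ)..(2 * P), (1:ℝ)) by rw [hone]]
    rw [← split4 (γ / 12) (ν / 6) C D (fun θ => (u θ) ^ 4) (fun θ => (u θ) ^ 3)
      u (fun _ => 1) (by fun_prop) (by fun_prop) hcu (by fun_prop)]
    rw [hE, ← intervalIntegral.integral_const_mul]
    exact intervalIntegral.integral_congr fun θ _ => by
      linear_combination heq2 θ
  have e5 : (lam * k ^ 2 / 2) * T = (γ / 12) * M5 - (ν / 6) * M4 + C * M2 + D * M1 := by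
    rw [← split4 (γ / 12) (ν / 6) C D (fun θ => (u θ) ^ 5) (fun θ => (u θ) ^ 4)
      (fun θ => (u θ) ^ 2) u (by fun_prop) (by fun_prop) (by fun_prop) hcu]
    rw [hT, ← intervalIntegral.integral_const_mul]
    exact intervalIntegral.integral_congr fun θ _ => by
      linear_combination (u θ) * heq2 θ
  -- splitting the vanishing integrals
  have f2 : E + A1 = 0 := by
    rw [hE, hA1, ← intervalIntegral.integral_add (f := fun θ => (deriv u θ) ^ 2)
      (g := fun θ => u θ * iteratedDeriv 2 u θ)
      ((by fun_prop : Continuous fun θ => (deriv u θ) ^ 2).intervalIntegrable 0 (2 * P))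
      ((hcu.mul hcu'').intervalIntegrable 0 (2 * P))]
    exact F2
  have f3 : 2 * T + A2 = 0 := by
    have h2T : 2 * T = ∫ θ in (0:ℝ)..(2 * P), 2 * (u θ * (deriv u θ) ^ 2) :=
      (intervalIntegral.integral_const_mul 2 _).symm
    rw [h2T, hA2, ← intervalIntegral.integral_add (f := fun θ => 2 * (u θ * (deriv u θ) ^ 2))
      (g := fun θ => (u θ) ^ 2 * iteratedDeriv 2 u θ)
      ((by fun_prop : Continuous fun θ => 2 * (u θ * (deriv u θ) ^ 2)).intervalIntegrable 0 (2 * P))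
      (((hcu.pow 2).mul hcu'').intervalIntegrable 0 (2 * P))]
    exact F3
  -- final algebra
  have hfin : 4 * (lam * k ^ 2) * γ ^ 2 * T
      = 3 * C * γ ^ 2 * M2 + (5 * ν ^ 2 * C / 6) * (2 * P) + ν * C * γ * M1
        + 4 * D * γ ^ 2 * M1 + (2 * ν * D * γ / 3) * (2 * P) - (5 * ν ^ 3 / 12) * M2 := by
    linear_combination (-γ ^ 2) * (e3 - 4 * e5) + (γ ^ 2 * (lam * k ^ 2)) * f3
      + (γ * ν / 3) * (e2 + 2 * e4) - (γ * ν / 3 * (lam * k ^ 2)) * f2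
      + (5 * ν ^ 2 / 6) * e1
  have hlam : lam ≠ 0 := fun h => hlk (by rw [h]; ring)
  have hk : k ≠ 0 := fun h => hlk (by rw [h]; ring)
  subst hα₁ hα₂
  field_simp
  linear_combination 96 * hfin
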